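/- Every regular scheme is binary. That is, let (Ω,S) be a scheme on a finite set Ω such that |{β ∈ Ω : (α,β) ∈ s}| = 1 for every α ∈ Ω and every s ∈ S. Then for every m ≥ 1 and all tuples x, y ∈ Ω^m such that for all 1 ≤ i,j ≤ m the class of S containing (x_i, x_j) equals the class containing (y_i, y_j), there exists an automorphism f of (Ω,S) with f(x_i) = y_i for i = 1,…,m. -/

import Mathlib

/-- A scheme on a set `Ω`: a partition `S` of `Ω × Ω` containing the diagonal,
closed under taking converse relations, and such that intersection numbers
are well defined. -/
def IsScheme {Ω : Type*} (S : Set (Set (Ω × Ω))) : Prop :=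
  Setoid.IsPartition S ∧
  {p : Ω × Ω | p.1 = p.2} ∈ S ∧
  (∀ s ∈ S, {p : Ω × Ω | (p.2, p.1) ∈ s} ∈ S) ∧
  (∀ r ∈ S, ∀ s ∈ S, ∀ t ∈ S, ∀ p ∈ t, ∀ q ∈ t,
    {γ : Ω | (p.1, γ) ∈ r ∧ (γ, p.2) ∈ s}.ncard =
    {γ : Ω | (q.1, γ) ∈ r ∧ (γ, q.2) ∈ s}.ncard)

/-- An automorphism of a scheme: a permutation preserving every basis relation. -/
def IsSchemeAut {Ω : Type*} (S : Set (Set (Ω × Ω))) (f : Equiv.Perm Ω) : Prop :=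
  ∀ s ∈ S, (fun p : Ω × Ω => (f p.1, f p.2)) '' s = s

/-- A scheme is binary if every pair of tuples with the same array of basis
relations is related by an automorphism. -/
def IsBinary {Ω : Type*} (S : Set (Set (Ω × Ω))) : Prop :=
  ∀ m : ℕ, 0 < m → ∀ x y : Fin m → Ω,
    (∀ i j : Fin m, ∀ s ∈ S, ((x i, x j) ∈ s ↔ (y i, y j) ∈ s)) →
    ∃ f : Equiv.Perm Ω, IsSchemeAut S f ∧ ∀ i, f (x i) = y i

/-- every regular scheme is binary. -/
theorem regular_scheme_is_binary {Ω : Type*} [Fintype Ω]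
    (S : Set (Set (Ω × Ω))) (hS : IsScheme S)
    (hreg : ∀ α : Ω, ∀ s ∈ S, {β : Ω | (α, β) ∈ s}.ncard = 1) :
    IsBinary S := by
  classical
  obtain ⟨⟨hne, hpart⟩, hdiag, hconv, hnum⟩ := hS
  have hpart' : ∀ a : Ω × Ω, ∃ b, (b ∈ S ∧ a ∈ b) ∧ ∀ c, (c ∈ S ∧ a ∈ c) → c = b :=
    fun a => hpart a
  choose cls hcls huniq using hpart'
  have cls_eq : ∀ {p : Ω × Ω} {s : Set (Ω × Ω)}, s ∈ S → p ∈ s → cls p = s := by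
    intro p s hs hp
    exact (huniq p s ⟨hs, hp⟩).symm
  -- unique successor
  have hsing : ∀ (b : Ω) (s : Set (Ω × Ω)), ∃ β, s ∈ S → {β' : Ω | (b, β') ∈ s} = {β} := by
    intro b s
    by_cases hs : s ∈ S
    · obtain ⟨β, hβ⟩ := Set.ncard_eq_one.mp (hreg b s hs)
      exact ⟨β, fun _ => hβ⟩
    · exact ⟨b, fun h => absurd h hs⟩
  choose nxt hnxt using hsing
  have mem_nxt : ∀ (b : Ω) (s : Set (Ω × Ω)), s ∈ S → (b, nxt b s) ∈ s := by
    intro b s hs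
    have := hnxt b s hs
    have : nxt b s ∈ {β' : Ω | (b, β') ∈ s} := by rw [this]; rfl
    exact this
  have nxt_uniq : ∀ (b β : Ω) (s : Set (Ω × Ω)), s ∈ S → (b, β) ∈ s → β = nxt b s := by
    intro b β s hs hβ
    have : β ∈ {β' : Ω | (b, β') ∈ s} := hβ
    rw [hnxt b s hs] at this
    exact this
  -- the candidate maps
  set F : Ω → Ω → Ω → Ω := fun a b α => nxt b (cls (a, α)) with hF
  have hFmem : ∀ a b α, (b, F a b α) ∈ cls (a, α) :=
    fun a b α => mem_nxt b _ (hcls (a, α)).1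
  have hFeq : ∀ a b α β, (b, β) ∈ cls (a, α) → F a b α = β := by
    intro a b α β hβ
    exact (nxt_uniq b β _ (hcls (a, α)).1 hβ).symm
  have hFinv : ∀ a b α, F b a (F a b α) = α := by
    intro a b α
    have h1 : cls (b, F a b α) = cls (a, α) :=
      cls_eq (hcls (a, α)).1 (hFmem a b α)
    have : F b a (F a b α) = nxt a (cls (a, α)) := by
      exact congrArg (nxt a) h1
    rw [this]
    exact (nxt_uniq a α _ (hcls (a, α)).1 (hcls (a, α)).2).symm
  -- homomorphism property
  have hhom : ∀ a b α β s, s ∈ S → (α, β) ∈ s → (F a b α, F a b β) ∈ s := by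
    intro a b α β s hs hαβ
    have hr := (hcls (a, α)).1
    have ht := (hcls (a, β)).1
    have hcount := hnum (cls (a, α)) hr s hs (cls (a, β)) ht
      (a, β) (hcls (a, β)).2 (b, F a b β) (hFmem a b β)
    have hαin : α ∈ {γ : Ω | (a, γ) ∈ cls (a, α) ∧ (γ, β) ∈ s} :=
      ⟨(hcls (a, α)).2, hαβ⟩
    have hpos : 0 < {γ : Ω | (a, γ) ∈ cls (a, α) ∧ (γ, β) ∈ s}.ncard := by
      rw [Set.ncard_pos (Set.toFinite _)]
      exact ⟨α, hαin⟩
    rw [hcount] at hpos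
    obtain ⟨γ, hγ1, hγ2⟩ := (Set.ncard_pos (Set.toFinite _)).mp hpos
    have : γ = F a b α := nxt_uniq b γ _ hr hγ1
    rwa [this] at hγ2
  -- now the theorem
  intro m hm x y hxy
  set a := x ⟨0, hm⟩
  set b := y ⟨0, hm⟩
  refine ⟨⟨F a b, F b a, hFinv a b, hFinv b a⟩, ?_, ?_⟩
  · intro s hs
    ext ⟨γ, δ⟩
    constructor
    · rintro ⟨⟨α, β⟩, hmem, heq⟩
      simp only [Prod.mk.injEq] at heq
      obtain ⟨h1, h2⟩ := heq
      rw [← h1, ← h2]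
      exact hhom a b α β s hs hmem
    · intro hγδ
      refine ⟨(F b a γ, F b a δ), hhom b a γ δ s hs hγδ, ?_⟩
      simp only [Prod.mk.injEq]
      exact ⟨hFinv b a γ, hFinv b a δ⟩
  · intro i
    show F a b (x i) = y i
    apply hFeq
    exact (hxy ⟨0, hm⟩ i (cls (a, x i)) (hcls (a, x i)).1).mp (hcls (a, x i)).2
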